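/- Let A_1, …, A_k be pairwise commuting N×N matrices with nonnegative integer entries forming an irreducible family, with every row sum of every A_i at least 2 and with A = A_1⋯A_k irreducible; let x be the unimodular Perron–Frobenius eigenvector and let M be the Borel probability measure on X_B determined by the cylinder formula. For each vertex v ∈ {1,…,N}, fix an enumeration μ^v_0, …, μ^v_{m_v−1} of the finite paths of length k in B with range v. Then for every n ∈ ℕ, the family of vectors { ρ^{n/2}·( M([μ^{s(λ)}_0])^{−1} χ_{[λμ^{s(λ)}_0]} − M([μ^{s(λ)}_i])^{−1} χ_{[λμ^{s(λ)}_i]} ) : λ ∈ F^{nk}B, 1 ≤ i ≤ m_{s(λ)} − 1 }, where ρ = ρ_1⋯ρ_k, is a vector-space basis of 𝒲_n (it is linearly independent and spans 𝒲_n). -/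

import Mathlib

open scoped Classical ENNReal Topology
open TopologicalSpace MeasureTheory Filter Set
open Fin.NatCast

namespace KBratteli

variable (k N : ℕ) [NeZero k] (A : Fin k → Matrix (Fin N) (Fin N) ℕ)

/-- An edge at level `n` of the stationary `k`-Bratteli diagram of the matrices
`A 0, …, A (k-1)`: an element of `Edge k N A n` is an edge whose source lies in the
level-`(n+1)` vertex set and whose range lies in the level-`n` vertex set (both copies of
`Fin N`); there are exactly `A (n % k) p q` edges with range `p` and source `q`. -/
structure Edge (n : ℕ) : Type where
  rg : Fin N
  src : Fin N
  idx : Fin (A (n : Fin k) rg src)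

/-- The infinite path space `X_B` of the stationary `k`-Bratteli diagram of `A`. -/
def PathSpace : Type :=
  { x : (n : ℕ) → Edge k N A n // ∀ n, (x n).src = (x (n + 1)).rg }

/-- A finite path of length `ℓ` beginning at level `0`: a composable string of edges,
together with the vertices it visits.  Length-`0` paths are vertices of `V₀`. -/
structure FinPath (ℓ : ℕ) : Type where
  vtx : Fin (ℓ + 1) → Fin N
  edge : (i : Fin ℓ) → Edge k N A i
  rg_eq : ∀ i : Fin ℓ, (edge i).rg = vtx i.castSucc
  src_eq : ∀ i : Fin ℓ, (edge i).src = vtx i.succ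

/-- `FB`: the set of all finite paths (of all lengths) beginning at level `0`. -/
abbrev FB : Type := Σ ℓ : ℕ, FinPath k N A ℓ

variable {k N A}

/-- The source (final) vertex of a finite path. -/
def FinPath.src {ℓ : ℕ} (lam : FinPath k N A ℓ) : Fin N := lam.vtx (Fin.last ℓ)

/-- The range (initial, level-0) vertex of a finite path. -/
def FinPath.rg {ℓ : ℕ} (lam : FinPath k N A ℓ) : Fin N := lam.vtx 0

/-- The length-0 finite path at the level-0 vertex `v`. -/
def vertexPath (v : Fin N) : FinPath k N A 0 where
  vtx := fun _ => v
  edge := fun i => i.elim0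
  rg_eq := fun i => i.elim0
  src_eq := fun i => i.elim0

/-- The cylinder set `[λ]` of a finite path `λ`: all infinite paths with initial
segment `λ`. -/
def Cyl {ℓ : ℕ} (lam : FinPath k N A ℓ) : Set (PathSpace k N A) :=
  { x | (x.1 0).rg = lam.rg ∧ ∀ i : Fin ℓ, x.1 i = lam.edge i }

variable (k N A) in
/-- The collection of all cylinder sets. -/
def cylinderSets : Set (Set (PathSpace k N A)) :=
  { S | ∃ (ℓ : ℕ) (lam : FinPath k N A ℓ), S = Cyl lam }

/-- The cylinder-set topology on the infinite path space. -/
instance : TopologicalSpace (PathSpace k N A) :=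
  generateFrom (cylinderSets k N A)

/-- The Borel σ-algebra of the cylinder-set topology. -/
instance : MeasurableSpace (PathSpace k N A) := borel _

instance : BorelSpace (PathSpace k N A) := ⟨rfl⟩

lemma isOpen_cyl {ℓ : ℕ} (lam : FinPath k N A ℓ) : IsOpen (Cyl lam) :=
  isOpen_generateFrom_of_mem ⟨ℓ, lam, rfl⟩

lemma measurableSet_cyl {ℓ : ℕ} (lam : FinPath k N A ℓ) : MeasurableSet (Cyl lam) :=
  (isOpen_cyl lam).measurableSet

/-- Edges form a finite type. -/
def edgeEquiv (n : ℕ) : Edge k N A n ≃ Σ p : Fin N, Σ q : Fin N, Fin (A (n : Fin k) p q) where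
  toFun e := ⟨e.rg, e.src, e.idx⟩
  invFun t := ⟨t.1, t.2.1, t.2.2⟩
  left_inv e := rfl
  right_inv t := rfl

instance (n : ℕ) : Finite (Edge k N A n) := by
  have : ∀ p q : Fin N, Finite (Fin (A (n : Fin k) p q)) := fun _ _ => inferInstance
  have : Finite (Σ p : Fin N, Σ q : Fin N, Fin (A (n : Fin k) p q)) := inferInstance
  exact Finite.of_equiv _ (edgeEquiv n).symm

instance (ℓ : ℕ) : Finite (FinPath k N A ℓ) := by
  have hinj : Function.Injective
      (fun lam : FinPath k N A ℓ => (lam.vtx, lam.edge)) := by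
    rintro ⟨v, e, h1, h2⟩ ⟨v', e', h1', h2'⟩ h
    simp only [Prod.mk.injEq] at h
    obtain ⟨hv, he⟩ := h
    subst hv; subst he; rfl
  exact Finite.of_injective _ hinj

instance : Countable (FB k N A) := by infer_instance

/-- The initial segment of length `m` of an infinite path. -/
def prefixPath (x : PathSpace k N A) (m : ℕ) : FinPath k N A m where
  vtx := fun i => (x.1 i).rg
  edge := fun i => x.1 i
  rg_eq := fun _ => rfl
  src_eq := fun i => x.2 i

lemma mem_cyl_prefixPath (x : PathSpace k N A) (m : ℕ) : x ∈ Cyl (prefixPath x m) :=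
  ⟨rfl, fun _ => rfl⟩

lemma measurableSet_coord (j : ℕ) (P : Edge k N A j → Prop) :
    MeasurableSet { x : PathSpace k N A | P (x.1 j) } := by
  have h : { x : PathSpace k N A | P (x.1 j) }
      = ⋃ (lam : FinPath k N A (j + 1)) (_ : P (lam.edge (Fin.last j))), Cyl lam := by
    ext x
    simp only [Set.mem_setOf_eq, Set.mem_iUnion]
    constructor
    · intro hx
      exact ⟨prefixPath x (j + 1), hx, mem_cyl_prefixPath x (j + 1)⟩
    · rintro ⟨lam, hP, -, hedge⟩
      have hx : x.1 j = lam.edge (Fin.last j) := hedge (Fin.last j)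
      rw [hx]; exact hP
  rw [h]
  exact MeasurableSet.iUnion fun lam => MeasurableSet.iUnion fun _ => measurableSet_cyl lam

/-- The first level at which two infinite paths differ. -/
noncomputable def firstDiff (x y : PathSpace k N A) : ℕ := sInf { n | x.1 n ≠ y.1 n }

/-- The function `d_w` associated to a weight-type function `w` on finite paths:
`d_w(x,x) = 0`; `d_w(x,y) = 1` if `x` and `y` have no common initial sub-path (i.e. they
do not even start at the same level-0 vertex); and otherwise `d_w(x,y) = w(x ∧ y)`, the
value of `w` on the longest common initial sub-path of `x` and `y`. -/
noncomputable def distW (w : FB k N A → ℝ) (x y : PathSpace k N A) : ℝ :=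
  if x = y then 0
  else if (x.1 0).rg = (y.1 0).rg then w ⟨firstDiff x y, prefixPath x (firstDiff x y)⟩
  else 1

/-- `η` is an (initial) sub-path of `λ`. -/
def IsSubPath {m ℓ : ℕ} (η : FinPath k N A m) (lam : FinPath k N A ℓ) : Prop :=
  ∃ h : m ≤ ℓ, η.rg = lam.rg ∧ ∀ i : Fin m, η.edge i = lam.edge (Fin.castLE h i)

/-- `lam ∈ F_γ B` : the finite path `lam` extends `γ`. -/
def Extends {m : ℕ} (γ : FinPath k N A m) (lam : FB k N A) : Prop :=
  IsSubPath γ lam.2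

/-- The spectral radius of a matrix of nonnegative integers, as a real number. -/
noncomputable def specRad {N : ℕ} (M : Matrix (Fin N) (Fin N) ℕ) : ℝ :=
  (spectralRadius ℂ (M.map (Nat.cast : ℕ → ℂ))).toReal

/-- The weight `w_δ` on the stationary `k`-Bratteli diagram of `A`, relative to data
`ρ : Fin k → ℝ` (the spectral radii) and `xv : Fin N → ℝ` (the Perron–Frobenius
eigenvector): on a path `η` of length `q·k + t` (`0 ≤ t ≤ k-1`) it is
`(ρ₁^{q+1} ⋯ ρ_t^{q+1} · ρ_{t+1}^q ⋯ ρ_k^q)^{-1/δ} · xv (s η)`. -/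
noncomputable def wt (δ : ℝ) (ρ : Fin k → ℝ) (xv : Fin N → ℝ) (lam : FB k N A) : ℝ :=
  (∏ i : Fin k, ρ i ^ (if (i : ℕ) < lam.1 % k then lam.1 / k + 1 else lam.1 / k))
      ^ (-(1 / δ)) * xv lam.2.src

/-- The value `M([λ]) = (ρ₁⋯ρ_t)^{-(q+1)} (ρ_{t+1}⋯ρ_k)^{-q} · x_{s(λ)}` of the
measure `M` on the cylinder set of a path of length `q·k + t`. -/
noncomputable def Mval (ρ : Fin k → ℝ) (xv : Fin N → ℝ) (lam : FB k N A) : ℝ :=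
  (∏ i : Fin k, ρ i ^ (if (i : ℕ) < lam.1 % k then lam.1 / k + 1 else lam.1 / k))⁻¹
    * xv lam.2.src

/-- A family of matrices is irreducible if for every pair of indices some finite product
of matrices from the family has positive corresponding entry. -/
def IrreducibleFamily {k N : ℕ} (A : Fin k → Matrix (Fin N) (Fin N) ℕ) : Prop :=
  ∀ a b : Fin N, ∃ l : List (Fin k), 0 < (l.map A).prod a b

/-- A single square matrix with nonnegative integer entries is irreducible if for every
pair of indices some positive power has positive corresponding entry. -/
def MatIrreducible {N : ℕ} (B : Matrix (Fin N) (Fin N) ℕ) : Prop :=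
  ∀ a b : Fin N, ∃ m : ℕ, 0 < m ∧ 0 < (B ^ m) a b

/-- The diameter (in `ℝ≥0∞`) of a set of infinite paths relative to `d_w`. -/
noncomputable def diamW (w : FB k N A → ℝ) (U : Set (PathSpace k N A)) : ℝ≥0∞ :=
  ⨆ (x) (_ : x ∈ U) (y) (_ : y ∈ U), ENNReal.ofReal (distW w x y)

/-- The `t`-dimensional Hausdorff (outer) measure of a set `Z` relative to the metric
`d_w`: `H^t(Z) = lim_{ε → 0} inf { Σᵢ (diam Uᵢ)^t : Z ⊆ ⋃ᵢ Uᵢ, diam Uᵢ < ε }`. -/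
noncomputable def hausW (w : FB k N A → ℝ) (t : ℝ) (Z : Set (PathSpace k N A)) : ℝ≥0∞ :=
  ⨆ (ε : ℝ≥0∞) (_ : 0 < ε),
    ⨅ (U : ℕ → Set (PathSpace k N A)) (_ : Z ⊆ ⋃ n, U n)
      (_ : ∀ n, diamW w (U n) < ε), ∑' n, diamW w (U n) ^ t

lemma natCast_mul_add (n i : ℕ) : ((n * k + i : ℕ) : Fin k) = (i : Fin k) := by
  push_cast
  simp [Fin.natCast_self]

/-- Transport of edges between levels governed by the same matrix (the diagram is
stationary with period `k`). -/
def Edge.cast {i j : ℕ} (h : (i : Fin k) = (j : Fin k)) (e : Edge k N A i) :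
    Edge k N A j where
  rg := e.rg
  src := e.src
  idx := Fin.cast (by rw [h]) e.idx

/-- The cylinder set `[γ e]` of a finite path `γ` (of length `m`) extended by one
further edge `e` at level `m`. -/
def cylExt {m : ℕ} (γ : FinPath k N A m) (e : Edge k N A m) : Set (PathSpace k N A) :=
  Cyl γ ∩ { x | x.1 m = e }

lemma measurableSet_cylExt {m : ℕ} (γ : FinPath k N A m) (e : Edge k N A m) :
    MeasurableSet (cylExt γ e) :=
  (measurableSet_cyl γ).inter (measurableSet_coord m fun f => f = e)

/-- The cylinder set `[λ μ]` of the concatenation of `λ ∈ F^{nk}B` with `μ ∈ F^{k}B`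
(the diagram being stationary of period `k`, `μ` concatenates onto `λ`). -/
def cylCat {n : ℕ} (lam : FinPath k N A (n * k)) (η : FinPath k N A k) :
    Set (PathSpace k N A) :=
  Cyl lam ∩ { x | (x.1 (n * k)).rg = η.rg } ∩
    ⋂ i : Fin k,
      { x | x.1 (n * k + (i : ℕ)) = Edge.cast (natCast_mul_add n (i : ℕ)).symm (η.edge i) }

lemma measurableSet_cylCat {n : ℕ} (lam : FinPath k N A (n * k)) (η : FinPath k N A k) :
    MeasurableSet (cylCat lam η) :=
  ((measurableSet_cyl lam).inter
      (measurableSet_coord (n * k) (fun e => e.rg = η.rg))).inter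
    (MeasurableSet.iInter fun i => measurableSet_coord (n * k + (i : ℕ))
      (fun e => e = Edge.cast (natCast_mul_add n (i : ℕ)).symm (η.edge i)))



end KBratteli

namespace KBratteli

variable {k N : ℕ} [NeZero k] {A : Fin k → Matrix (Fin N) (Fin N) ℕ}

section L2

variable (M : MeasureTheory.Measure (PathSpace k N A)) [MeasureTheory.IsFiniteMeasure M]

/-- The indicator function `χ_{[λ]}` of a cylinder set, as an element of `L²(X_B, M)`. -/
noncomputable def chi {ℓ : ℕ} (lam : FinPath k N A ℓ) : Lp ℂ 2 M :=
  indicatorConstLp 2 (measurableSet_cyl lam) (measure_ne_top M _) (1 : ℂ)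

/-- The indicator function `χ_{[γ e]}` of the cylinder of a path `γ` extended by one
further edge `e`, as an element of `L²(X_B, M)`. -/
noncomputable def chiE {m : ℕ} (γ : FinPath k N A m) (e : Edge k N A m) : Lp ℂ 2 M :=
  indicatorConstLp 2 (measurableSet_cylExt γ e) (measure_ne_top M _) (1 : ℂ)

/-- The indicator function `χ_{[λ μ]}` of the cylinder of the concatenation of
`λ ∈ F^{nk}B` and `μ ∈ F^{k}B`, as an element of `L²(X_B, M)`. -/
noncomputable def chiC {n : ℕ} (lam : FinPath k N A (n * k)) (η : FinPath k N A k) :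
    Lp ℂ 2 M :=
  indicatorConstLp 2 (measurableSet_cylCat lam η) (measure_ne_top M _) (1 : ℂ)

/-- The constant function `1` in `L²(X_B, M)`. -/
noncomputable def oneL2 : Lp ℂ 2 M :=
  indicatorConstLp 2 MeasurableSet.univ (measure_ne_top M _) (1 : ℂ)

/-- `Ṽ_m`, the linear span in `L²(X_B, M)` of the indicators of cylinders of paths of
length `m`. -/
noncomputable def Vt (m : ℕ) : Submodule ℂ (Lp ℂ 2 M) :=
  Submodule.span ℂ (Set.range fun lam : FinPath k N A m => chi M lam)

/-- `𝒲_n = 𝒱_{n+1} ⊓ 𝒱_n^⊥` where `𝒱_n = Ṽ_{nk}`. -/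
noncomputable def Wn (n : ℕ) : Submodule ℂ (Lp ℂ 2 M) :=
  Vt M ((n + 1) * k) ⊓ (Vt M (n * k))ᗮ

/-- `E_{-1}`: the subspace of constant functions. -/
noncomputable def Eneg : Submodule ℂ (Lp ℂ 2 M) :=
  Submodule.span ℂ {oneL2 M}

/-- `E_0 = span{ M([v])⁻¹ χ_{[v]} − M([v'])⁻¹ χ_{[v']} : v ≠ v' ∈ V₀ }`. -/
noncomputable def Ezero : Submodule ℂ (Lp ℂ 2 M) :=
  Submodule.span ℂ
    { f | ∃ v v' : Fin N, v ≠ v' ∧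
        f = (((M (Cyl (vertexPath v))).toReal : ℂ))⁻¹ • chi M (vertexPath v)
            - (((M (Cyl (vertexPath v'))).toReal : ℂ))⁻¹ • chi M (vertexPath v') }

/-- `E_γ = span{ M([γe])⁻¹ χ_{[γe]} − M([γe'])⁻¹ χ_{[γe']} }` over distinct edges
`e ≠ e'` with range `s(γ)`. -/
noncomputable def Esub {m : ℕ} (γ : FinPath k N A m) : Submodule ℂ (Lp ℂ 2 M) :=
  Submodule.span ℂ
    { f | ∃ e e' : Edge k N A m, e ≠ e' ∧ e.rg = γ.src ∧ e'.rg = γ.src ∧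
        f = (((M (cylExt γ e)).toReal : ℂ))⁻¹ • chiE M γ e
            - (((M (cylExt γ e')).toReal : ℂ))⁻¹ • chiE M γ e' }

noncomputable instance (m : ℕ) : FiniteDimensional ℂ (Vt M m) :=
  FiniteDimensional.span_of_finite ℂ (Set.finite_range _)

noncomputable instance : FiniteDimensional ℂ (Eneg M) :=
  FiniteDimensional.span_of_finite ℂ (Set.finite_singleton _)

/-- `Ξ_q`: the orthogonal projection of `L²(X_B, M)` onto `R_q = Ṽ_{qk}`. -/
noncomputable def Xi (q : ℕ) : Lp ℂ 2 M →L[ℂ] Lp ℂ 2 M :=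
  (Vt M (q * k)).subtypeL.comp (Submodule.orthogonalProjectionOnto (Vt M (q * k)))

/-- `Ξ_{-1}`: the orthogonal projection onto the constants `R_{-1}`. -/
noncomputable def XiNeg : Lp ℂ 2 M →L[ℂ] Lp ℂ 2 M :=
  (Eneg M).subtypeL.comp (Submodule.orthogonalProjectionOnto (Eneg M))

/-- `P_q = Ξ_q − Ξ_{q-1}` (with `Ξ_{-1}` the projection onto the constants). -/
noncomputable def Pq : ℕ → (Lp ℂ 2 M →L[ℂ] Lp ℂ 2 M)
  | 0 => Xi M 0 - XiNeg M
  | (q + 1) => Xi M (q + 1) - Xi M q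


/-- `R_{q-1}` for `q ∈ ℕ`, with the convention `R_{-1} = ` constants. -/
noncomputable def Rprev : ℕ → Submodule ℂ (Lp ℂ 2 M)
  | 0 => Eneg M
  | (q + 1) => Vt M (q * k)

/-- The domain of the Dirac operator `D`. -/
noncomputable def domD (α : ℕ → ℝ) : Set (Lp ℂ 2 M) :=
  { f | Summable fun q : ℕ => α q ^ 2 * ‖Pq M q f‖ ^ 2 }

/-- The Dirac operator `D f = Σ_q α_q P_q f`. -/
noncomputable def opD (α : ℕ → ℝ) (f : Lp ℂ 2 M) : Lp ℂ 2 M :=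
  ∑' q : ℕ, ((α q : ℂ)) • Pq M q f

end L2

end KBratteli

namespace KBratteli

variable {k N : ℕ} [NeZero k] {A : Fin k → Matrix (Fin N) (Fin N) ℕ}

lemma Edge.ext_val {i : ℕ} {e e' : Edge k N A i} (h1 : e.rg = e'.rg)
    (h2 : e.src = e'.src) (h3 : (e.idx : ℕ) = (e'.idx : ℕ)) : e = e' := by
  cases e; cases e'
  subst h1; subst h2
  simp only [mk.injEq, heq_eq_eq, true_and]
  exact Fin.ext h3

@[simp] lemma Edge.cast_rg {i j : ℕ} (h : (i : Fin k) = (j : Fin k)) (e : Edge k N A i) :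
    (Edge.cast h e).rg = e.rg := rfl

@[simp] lemma Edge.cast_src {i j : ℕ} (h : (i : Fin k) = (j : Fin k)) (e : Edge k N A i) :
    (Edge.cast h e).src = e.src := rfl

@[simp] lemma Edge.cast_idx {i j : ℕ} (h : (i : Fin k) = (j : Fin k)) (e : Edge k N A i) :
    ((Edge.cast h e).idx : ℕ) = (e.idx : ℕ) := rfl

lemma FinPath.ext' {ℓ : ℕ} {p q : FinPath k N A ℓ} (hr : p.rg = q.rg)
    (he : ∀ i, p.edge i = q.edge i) : p = q := by
  have hv : p.vtx = q.vtx := by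
    funext i
    induction i using Fin.cases with
    | zero => exact hr
    | succ j => rw [← p.src_eq j, ← q.src_eq j, he]
  cases p; cases q
  subst hv
  simp only [mk.injEq, heq_eq_eq, true_and]
  funext i; exact he i

lemma mem_cyl {ℓ : ℕ} {lam : FinPath k N A ℓ} {x : PathSpace k N A} :
    x ∈ Cyl lam ↔ (x.1 0).rg = lam.rg ∧ ∀ i : Fin ℓ, x.1 i = lam.edge i := Iff.rfl

lemma rg_of_mem_cyl {ℓ : ℕ} {lam : FinPath k N A ℓ} {x : PathSpace k N A}
    (hx : x ∈ Cyl lam) {m : ℕ} (hm : m ≤ ℓ) : (x.1 m).rg = lam.vtx ⟨m, Nat.lt_succ_of_le hm⟩ := by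
  cases m with
  | zero => exact hx.1
  | succ m' =>
    have h1 : x.1 m' = lam.edge ⟨m', by omega⟩ := hx.2 ⟨m', by omega⟩
    have h2 := (x.2 m').symm
    rw [h1] at h2
    rw [h2, lam.src_eq ⟨m', by omega⟩]
    rfl

lemma src_of_mem_cyl {ℓ : ℕ} {lam : FinPath k N A ℓ} {x : PathSpace k N A}
    (hx : x ∈ Cyl lam) : (x.1 ℓ).rg = lam.src := by
  have := rg_of_mem_cyl hx (le_refl ℓ)
  rw [this]; rfl

lemma cyl_disjoint {ℓ : ℕ} {p q : FinPath k N A ℓ} (h : p ≠ q) :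
    Cyl p ∩ Cyl q = (∅ : Set (PathSpace k N A)) := by
  by_contra hne
  obtain ⟨x, hxp, hxq⟩ := Set.nonempty_iff_ne_empty.2 hne
  exact h (FinPath.ext' (by rw [← hxp.1, hxq.1]) fun i => by rw [← hxp.2 i, hxq.2 i])

lemma cyl_subset_of_subPath {m ℓ : ℕ} {η : FinPath k N A m} {lam : FinPath k N A ℓ}
    (h : IsSubPath η lam) : Cyl lam ⊆ Cyl η := by
  obtain ⟨hle, hrg, hedge⟩ := h
  intro x hx
  refine ⟨by rw [hx.1, hrg], fun i => ?_⟩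
  have := hx.2 (Fin.castLE hle i)
  rw [← hedge i] at this
  exact this

end KBratteli

namespace KBratteli
variable {k N : ℕ} [NeZero k] {A : Fin k → Matrix (Fin N) (Fin N) ℕ}

lemma edge_cast_rfl {i : ℕ} (h : (i : Fin k) = (i : Fin k)) (e : Edge k N A i) :
    Edge.cast h e = e :=
  Edge.ext_val rfl rfl rfl

lemma edge_cast_cast {i j l : ℕ} (h1 : (i : Fin k) = (j : Fin k))
    (h2 : (j : Fin k) = (l : Fin k)) (e : Edge k N A i) :
    Edge.cast h2 (Edge.cast h1 e) = Edge.cast (h1.trans h2) e :=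
  Edge.ext_val rfl rfl rfl

variable (n : ℕ)

/-- The length-`k` segment of an infinite path starting at level `n*k`. -/
def seg (x : PathSpace k N A) : FinPath k N A k where
  vtx := fun j => (x.1 (n * k + (j : ℕ))).rg
  edge := fun j => Edge.cast (natCast_mul_add n (j : ℕ)).symm.symm (x.1 (n * k + (j : ℕ)))
  rg_eq := fun j => rfl
  src_eq := fun j => x.2 (n * k + (j : ℕ))

lemma seg_rg (x : PathSpace k N A) : (seg n x).rg = (x.1 (n * k)).rg := by
  simp [seg, FinPath.rg]

/-- Concatenation of a path of length `n*k` with a path of length `k`. -/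
def cat (lam : FinPath k N A (n * k)) (η : FinPath k N A k) (h : η.rg = lam.src) :
    FinPath k N A (n * k + k) where
  vtx := fun i => if hi : (i : ℕ) < n * k + 1 then lam.vtx ⟨i, hi⟩
    else η.vtx ⟨(i : ℕ) - n * k, by omega⟩
  edge := fun i => if hi : (i : ℕ) < n * k then lam.edge ⟨i, hi⟩
    else Edge.cast (show (((i : ℕ) - n * k : ℕ) : Fin k) = ((i : ℕ) : Fin k) by
      conv_rhs => rw [show (i : ℕ) = n * k + ((i : ℕ) - n * k) by omega]
      rw [natCast_mul_add]) (η.edge ⟨(i : ℕ) - n * k, by omega⟩)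
  rg_eq := by
    intro i
    beta_reduce
    by_cases hi : (i : ℕ) < n * k
    · rw [dif_pos hi, dif_pos (show ((i.castSucc : ℕ)) < n * k + 1 by simp; omega),
        lam.rg_eq ⟨i, hi⟩]
      exact congrArg lam.vtx (Fin.ext rfl)
    · rw [dif_neg hi, Edge.cast_rg, η.rg_eq ⟨(i : ℕ) - n * k, by omega⟩]
      by_cases hi' : ((i.castSucc : ℕ)) < n * k + 1
      · rw [dif_pos hi']
        have h0 : (⟨(i : ℕ) - n * k, by omega⟩ : Fin k).castSucc = (0 : Fin (k + 1)) := by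
          apply Fin.ext; simp at hi' ⊢; omega
        rw [h0]
        have h1 : η.vtx 0 = lam.src := h
        rw [h1]
        show lam.vtx (Fin.last (n * k)) = _
        congr 1
        apply Fin.ext; simp [Fin.last] at hi' ⊢; omega
      · rw [dif_neg hi']
        congr 1
  src_eq := by
    intro i
    beta_reduce
    by_cases hi : (i : ℕ) < n * k
    · rw [dif_pos hi, lam.src_eq ⟨i, hi⟩,
        dif_pos (show ((i.succ : ℕ)) < n * k + 1 by simp; omega)]
      exact congrArg lam.vtx (Fin.ext rfl)
    · rw [dif_neg hi, Edge.cast_src, η.src_eq ⟨(i : ℕ) - n * k, by omega⟩,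
        dif_neg (show ¬ ((i.succ : ℕ)) < n * k + 1 by simp; omega)]
      congr 1
      apply Fin.ext; simp; omega

variable {n}

lemma cat_rg (lam : FinPath k N A (n * k)) (η : FinPath k N A k) (h : η.rg = lam.src) :
    (cat n lam η h).rg = lam.rg := by
  simp only [FinPath.rg, cat]
  rw [dif_pos (by simp : ((0 : Fin (n * k + k + 1)) : ℕ) < n * k + 1)]
  rfl

lemma cat_src (lam : FinPath k N A (n * k)) (η : FinPath k N A k) (h : η.rg = lam.src) :
    (cat n lam η h).src = η.src := by
  have hk : 0 < k := Nat.pos_of_ne_zero (NeZero.ne k)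
  simp only [FinPath.src, cat]
  rw [dif_neg (by simp [Fin.last]; omega)]
  congr 1
  apply Fin.ext
  simp [Fin.last]

lemma isSubPath_cat (lam : FinPath k N A (n * k)) (η : FinPath k N A k)
    (h : η.rg = lam.src) : IsSubPath lam (cat n lam η h) := by
  refine ⟨by omega, (cat_rg lam η h).symm, fun i => ?_⟩
  have hi : ((Fin.castLE (by omega : n * k ≤ n * k + k) i : Fin (n * k + k)) : ℕ) < n * k := i.2
  simp only [cat, hi, dif_pos]
  congr 1

lemma cyl_cat (lam : FinPath k N A (n * k)) (η : FinPath k N A k) (h : η.rg = lam.src) :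
    Cyl (cat n lam η h) = cylCat lam η := by
  have hk : 0 < k := Nat.pos_of_ne_zero (NeZero.ne k)
  ext x
  constructor
  · intro hx
    have hlam : x ∈ Cyl lam := cyl_subset_of_subPath (isSubPath_cat lam η h) hx
    refine ⟨⟨hlam, ?_⟩, ?_⟩
    · show (x.1 (n * k)).rg = η.rg
      rw [src_of_mem_cyl hlam, ← h]
    · simp only [Set.mem_iInter, Set.mem_setOf_eq]
      intro i
      have hidx : n * k + (i : ℕ) < n * k + k := by omega
      have h2 : x.1 (n * k + (i : ℕ)) = (cat n lam η h).edge ⟨n * k + (i : ℕ), hidx⟩ :=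
        hx.2 ⟨n * k + (i : ℕ), hidx⟩
      rw [h2]
      simp only [cat]
      rw [dif_neg (show ¬ ((⟨n * k + (i : ℕ), hidx⟩ : Fin (n * k + k)) : ℕ) < n * k by simp)]
      have hfin : (⟨n * k + (i : ℕ) - n * k, by omega⟩ : Fin k) = i := Fin.ext (by simp)
      apply Edge.ext_val
      · simp only [Edge.cast_rg]
        exact congrArg (fun j => (η.edge j).rg) hfin
      · simp only [Edge.cast_src]
        exact congrArg (fun j => (η.edge j).src) hfin
      · simp only [Edge.cast_idx]
        exact congrArg (fun j => ((η.edge j).idx : ℕ)) hfin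
  · rintro ⟨⟨hlam, hrg⟩, hseg⟩
    simp only [Set.mem_iInter, Set.mem_setOf_eq] at hseg
    refine ⟨?_, fun i => ?_⟩
    · show (x.1 0).rg = (cat n lam η h).rg
      rw [cat_rg]; exact hlam.1
    · show x.1 i = (cat n lam η h).edge i
      by_cases hi : (i : ℕ) < n * k
      · simp only [cat]
        rw [dif_pos hi]
        exact hlam.2 ⟨i, hi⟩
      · simp only [cat]
        rw [dif_neg hi]
        have hj : (i : ℕ) - n * k < k := by omega
        have hx2 := hseg ⟨(i : ℕ) - n * k, hj⟩
        have hco : n * k + ((i : ℕ) - n * k) = (i : ℕ) := by omega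
        apply Edge.ext_val
        · conv_lhs => rw [← hco]
          exact congrArg Edge.rg hx2
        · conv_lhs => rw [← hco]
          exact congrArg Edge.src hx2
        · conv_lhs => rw [← hco]
          exact congrArg (fun e => (e.idx : ℕ)) hx2

end KBratteli

namespace KBratteli
variable {k N : ℕ} [NeZero k] {A : Fin k → Matrix (Fin N) (Fin N) ℕ} {n : ℕ}

lemma seg_rg' (x : PathSpace k N A) : (seg n x).rg = (x.1 (n * k)).rg := by
  show (x.1 (n * k + ((0 : Fin (k + 1)) : ℕ))).rg = _
  rw [show ((0 : Fin (k + 1)) : ℕ) = 0 from Fin.val_zero k, add_zero]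

lemma eq_seg_of_mem_cylCat {lam : FinPath k N A (n * k)} {η : FinPath k N A k}
    {x : PathSpace k N A} (hx : x ∈ cylCat lam η) : η = seg n x := by
  obtain ⟨⟨hlam, hrg⟩, hseg⟩ := hx
  simp only [Set.mem_iInter, Set.mem_setOf_eq] at hseg
  apply FinPath.ext'
  · rw [seg_rg']
    exact hrg.symm
  · intro i
    apply Edge.ext_val
    · exact (congrArg Edge.rg (hseg i)).symm
    · exact (congrArg Edge.src (hseg i)).symm
    · exact (congrArg (fun e => (e.idx : ℕ)) (hseg i)).symm

lemma mem_cylCat_seg {lam : FinPath k N A (n * k)} {x : PathSpace k N A}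
    (hx : x ∈ Cyl lam) : x ∈ cylCat lam (seg n x) := by
  refine ⟨⟨hx, ?_⟩, ?_⟩
  · show (x.1 (n * k)).rg = (seg n x).rg
    rw [seg_rg']
  · simp only [Set.mem_iInter, Set.mem_setOf_eq]
    intro i
    apply Edge.ext_val <;> rfl

lemma seg_rg_eq_src {lam : FinPath k N A (n * k)} {x : PathSpace k N A}
    (hx : x ∈ Cyl lam) : (seg n x).rg = lam.src := by
  rw [seg_rg']
  exact src_of_mem_cyl hx

lemma cylCat_subset {lam : FinPath k N A (n * k)} {η : FinPath k N A k} :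
    cylCat lam η ⊆ Cyl lam := fun x hx => hx.1.1

lemma cylCat_disjoint {lam lam' : FinPath k N A (n * k)} {η η' : FinPath k N A k}
    (h : lam ≠ lam' ∨ η ≠ η') :
    cylCat lam η ∩ cylCat lam' η' = (∅ : Set (PathSpace k N A)) := by
  ext x
  simp only [Set.mem_inter_iff, Set.mem_empty_iff_false, iff_false, not_and]
  intro h1 h2
  rcases h with h | h
  · have := cyl_disjoint h
    exact absurd (Set.mem_inter (cylCat_subset h1) (cylCat_subset h2))
      (by rw [this]; exact Set.notMem_empty x)
  · exact h ((eq_seg_of_mem_cylCat h1).trans (eq_seg_of_mem_cylCat h2).symm)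

end KBratteli

namespace KBratteli
open MeasureTheory

variable {α : Type*} [MeasurableSpace α] {μ : Measure α} [IsFiniteMeasure μ]

lemma ind_congr {S T : Set α} (h : S = T) (hS : MeasurableSet S) (hT : MeasurableSet T) :
    indicatorConstLp 2 hS (measure_ne_top μ S) (1 : ℂ) =
      indicatorConstLp 2 hT (measure_ne_top μ T) (1 : ℂ) := by subst h; rfl

lemma inner_ind {S T : Set α} (hS : MeasurableSet S) (hT : MeasurableSet T) :
    (inner ℂ (indicatorConstLp 2 hS (measure_ne_top μ S) (1 : ℂ))
        (indicatorConstLp 2 hT (measure_ne_top μ T) (1 : ℂ)) : ℂ)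
      = ((μ (T ∩ S)).toReal : ℂ) := by
  rw [L2.inner_indicatorConstLp_one hS (measure_ne_top μ S),
    setIntegral_indicatorConstLp hS hT (measure_ne_top μ T)]
  simp [Complex.real_smul, Measure.real]

lemma ind_union {S T : Set α} (h : Disjoint S T) (hS : MeasurableSet S)
    (hT : MeasurableSet T) :
    indicatorConstLp 2 (hS.union hT) (measure_ne_top μ _) (1 : ℂ) =
      indicatorConstLp 2 hS (measure_ne_top μ _) 1 +
        indicatorConstLp 2 hT (measure_ne_top μ _) 1 :=
  indicatorConstLp_disjoint_union hS hT _ _ h 1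

lemma ind_finset_sum {ι : Type*} (s : Finset ι) (S : ι → Set α)
    (hS : ∀ i, MeasurableSet (S i)) (hd : ∀ i j, i ≠ j → Disjoint (S i) (S j)) :
    indicatorConstLp 2 (MeasurableSet.biUnion s.countable_toSet (fun i _ => hS i))
        (measure_ne_top μ _) (1 : ℂ)
      = ∑ i ∈ s, indicatorConstLp 2 (hS i) (measure_ne_top μ _) (1 : ℂ) := by
  classical
  induction s using Finset.induction_on with
  | empty =>
    rw [ind_congr (by simp : (⋃ i ∈ (∅ : Finset ι), S i) = ∅) _ MeasurableSet.empty]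
    simp [indicatorConstLp_empty]
  | @insert a s ha ih =>
    have hds : Disjoint (S a) (⋃ i ∈ s, S i) := by
      rw [Set.disjoint_iff_inter_eq_empty]
      ext y
      simp only [Set.mem_inter_iff, Set.mem_iUnion, Set.mem_empty_iff_false, iff_false, not_and]
      rintro hy ⟨i, hi, hyi⟩
      exact (hd a i (by rintro rfl; exact ha hi)).le_bot ⟨hy, hyi⟩
    rw [ind_congr (by simp : (⋃ i ∈ insert a s, S i) = S a ∪ ⋃ i ∈ s, S i) _
        ((hS a).union (MeasurableSet.biUnion s.countable_toSet fun i _ => hS i)),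
      ind_union hds (hS a) _, ih, Finset.sum_insert ha]
    exact MeasurableSet.biUnion s.countable_toSet fun i _ => hS i

lemma Mval_of_mod {k N : ℕ} [NeZero k] {A : Fin k → Matrix (Fin N) (Fin N) ℕ}
    {ℓ t : ℕ} (hmod : ℓ % k = 0) (hdiv : ℓ / k = t) (lam : FinPath k N A ℓ)
    (ρ : Fin k → ℝ) (x : Fin N → ℝ) :
    Mval ρ x ⟨ℓ, lam⟩ = ((∏ i, ρ i) ^ t)⁻¹ * x lam.src := by
  unfold Mval
  simp only [hmod, hdiv, Nat.not_lt_zero, if_false, Finset.prod_pow]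

end KBratteli

namespace KBratteli
open MeasureTheory
variable {k N : ℕ} [NeZero k] {A : Fin k → Matrix (Fin N) (Fin N) ℕ} {n : ℕ}

/-- Truncation of a path of length `n*k + k` to its first `n*k` edges. -/
def trunc (p : FinPath k N A (n * k + k)) : FinPath k N A (n * k) where
  vtx := fun i => p.vtx (Fin.castLE (by omega) i)
  edge := fun i => p.edge (Fin.castLE (by omega) i)
  rg_eq := fun i => (p.rg_eq _).trans (congrArg p.vtx (Fin.ext rfl))
  src_eq := fun i => (p.src_eq _).trans (congrArg p.vtx (Fin.ext rfl))

/-- The last `k` edges of a path of length `n*k + k`, as a path of length `k`. -/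
def tail (p : FinPath k N A (n * k + k)) : FinPath k N A k where
  vtx := fun j => p.vtx ⟨n * k + (j : ℕ), by omega⟩
  edge := fun j => Edge.cast (natCast_mul_add n (j : ℕ)) (p.edge ⟨n * k + (j : ℕ), by omega⟩)
  rg_eq := fun j => by
    rw [Edge.cast_rg, p.rg_eq ⟨n * k + (j : ℕ), by omega⟩]
    exact congrArg p.vtx (Fin.ext rfl)
  src_eq := fun j => by
    rw [Edge.cast_src, p.src_eq ⟨n * k + (j : ℕ), by omega⟩]
    exact congrArg p.vtx (Fin.ext (by simp [Fin.val_succ]; omega))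

lemma tail_rg (p : FinPath k N A (n * k + k)) : (tail p).rg = (trunc p).src :=
  congrArg p.vtx (Fin.ext (by simp [FinPath.rg, FinPath.src, Fin.last]))

lemma cat_trunc_tail (p : FinPath k N A (n * k + k)) :
    cat n (trunc p) (tail p) (tail_rg p) = p := by
  apply FinPath.ext'
  · rw [cat_rg]
    exact congrArg p.vtx (Fin.ext rfl)
  · intro i
    by_cases hi : (i : ℕ) < n * k
    · simp only [cat]
      rw [dif_pos hi]
      rfl
    · simp only [cat]
      rw [dif_neg hi]
      have hfin : (⟨n * k + ((i : ℕ) - n * k), by omega⟩ : Fin (n * k + k)) = i :=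
        Fin.ext (by simp; omega)
    
      apply Edge.ext_val
      · exact congrArg (fun j => (p.edge j).rg) hfin
      · exact congrArg (fun j => (p.edge j).src) hfin
      · exact congrArg (fun j => ((p.edge j).idx : ℕ)) hfin

variable (M : Measure (PathSpace k N A)) [IsFiniteMeasure M]

lemma inner_chi_chiC {m : ℕ} (lam' : FinPath k N A m) (lam : FinPath k N A (n * k))
    (η : FinPath k N A k) :
    (inner ℂ (chi M lam') (chiC M lam η) : ℂ)
      = ((M (cylCat lam η ∩ Cyl lam')).toReal : ℂ) :=
  inner_ind (measurableSet_cyl lam') (measurableSet_cylCat lam η)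

lemma inner_chiC_chiC (lam' lam : FinPath k N A (n * k)) (η' η : FinPath k N A k) :
    (inner ℂ (chiC M lam' η') (chiC M lam η) : ℂ)
      = ((M (cylCat lam η ∩ cylCat lam' η')).toReal : ℂ) :=
  inner_ind (measurableSet_cylCat lam' η') (measurableSet_cylCat lam η)

lemma chiC_eq_chi (lam : FinPath k N A (n * k)) (η : FinPath k N A k) (h : η.rg = lam.src)
    (lam1 : FinPath k N A ((n + 1) * k)) (hcy : Cyl lam1 = cylCat lam η) :
    chiC M lam η = chi M lam1 :=
  ind_congr hcy.symm _ _

lemma cyl_cast {m m' : ℕ} (h : m = m') (p : FinPath k N A m) :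
    Cyl (h ▸ p : FinPath k N A m') = Cyl p := by subst h; rfl

lemma chi_cast {m m' : ℕ} (h : m = m') (p : FinPath k N A m) :
    chi M (h ▸ p : FinPath k N A m') = chi M p :=
  ind_congr (cyl_cast h p) _ _

end KBratteli
namespace KBratteli

/-- For any enumeration `μ^v_0, …, μ^v_{m_v−1}` of the length-`k`
paths with range `v`, the family
`ρ^{n/2} (M([μ^{s(λ)}_0])⁻¹ χ_{[λ μ^{s(λ)}_0]} − M([μ^{s(λ)}_i])⁻¹ χ_{[λ μ^{s(λ)}_i]})`,
over `λ ∈ F^{nk}B` and `1 ≤ i ≤ m_{s(λ)} − 1`, is a vector-space basis of `𝒲_n`. -/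
theorem statement14 (k N : ℕ) [NeZero k] [NeZero N]
    (A : Fin k → Matrix (Fin N) (Fin N) ℕ)
    (hcomm : ∀ i j, A i * A j = A j * A i)
    (hirr : IrreducibleFamily A)
    (hrow : ∀ (i : Fin k) (a : Fin N), 2 ≤ ∑ b, A i a b)
    (hAirr : MatIrreducible ((List.ofFn A).prod))
    (ρ : Fin k → ℝ) (hρ : ∀ i, ρ i = specRad (A i))
    (x : Fin N → ℝ) (hxpos : ∀ v, 0 < x v) (hxsum : ∑ v, x v = 1)
    (hxeig : ∀ i, ((A i).map (Nat.cast : ℕ → ℝ)).mulVec x = ρ i • x)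
    (M : MeasureTheory.Measure (PathSpace k N A)) [MeasureTheory.IsProbabilityMeasure M]
    (hM : ∀ lam : FB k N A, M (Cyl lam.2) = ENNReal.ofReal (Mval ρ x lam))
    (n : ℕ)
    (mfun : Fin N → ℕ) (hmpos : ∀ v, 0 < mfun v)
    (μpath : ∀ v : Fin N, Fin (mfun v) → FinPath k N A k)
    (hμrg : ∀ v j, (μpath v j).rg = v)
    (hμinj : ∀ v, Function.Injective (μpath v))
    (hμsurj : ∀ (v : Fin N) (η : FinPath k N A k), η.rg = v → ∃ j, μpath v j = η)
    (g : (Σ lam : FinPath k N A (n * k), { i : ℕ // 1 ≤ i ∧ i < mfun lam.src }) → Lp ℂ 2 M)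
    (hg : ∀ p, g p
        = (((∏ i : Fin k, ρ i) ^ ((n : ℝ) / 2) : ℝ) : ℂ) •
            ((((M (Cyl (μpath p.1.src ⟨0, hmpos p.1.src⟩))).toReal : ℂ))⁻¹
                • chiC M p.1 (μpath p.1.src ⟨0, hmpos p.1.src⟩)
              - (((M (Cyl (μpath p.1.src ⟨p.2.1, p.2.2.2⟩))).toReal : ℂ))⁻¹
                • chiC M p.1 (μpath p.1.src ⟨p.2.1, p.2.2.2⟩))) :
    LinearIndependent ℂ g ∧ Submodule.span ℂ (Set.range g) = Wn M n := by
  classical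
  have hk : 0 < k := Nat.pos_of_ne_zero (NeZero.ne k)
  -- positivity of the spectral radii
  have hρpos : ∀ i, 0 < ρ i := by
    intro i
    set a0 : Fin N := ⟨0, Nat.pos_of_ne_zero (NeZero.ne N)⟩
    have hev := congrFun (hxeig i) a0
    have hlhs : ((A i).map (Nat.cast : ℕ → ℝ)).mulVec x a0 = ∑ b, (A i a0 b : ℝ) * x b := by
      simp [Matrix.mulVec, dotProduct, Matrix.map_apply]
    have hpos : 0 < ∑ b, (A i a0 b : ℝ) * x b := by
      obtain ⟨b, hb⟩ : ∃ b, 0 < A i a0 b := by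
        by_contra hall
        push_neg at hall
        have h0 : ∑ b, A i a0 b = 0 :=
          Finset.sum_eq_zero fun b _ => Nat.le_zero.1 (hall b)
        have := hrow i a0
        omega
      refine Finset.sum_pos' (fun b _ => mul_nonneg (Nat.cast_nonneg _) (hxpos b).le)
        ⟨b, Finset.mem_univ b, mul_pos (by exact_mod_cast hb) (hxpos b)⟩
    rw [hlhs] at hev
    simp only [Pi.smul_apply, smul_eq_mul] at hev
    rw [hev] at hpos
    nlinarith [hxpos a0]
  have hrpos : 0 < ∏ i, ρ i := Finset.prod_pos fun i _ => hρpos i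
  have hMvalpos : ∀ lam : FB k N A, 0 < Mval ρ x lam := fun lam =>
    mul_pos (inv_pos.2 (Finset.prod_pos fun i _ => pow_pos (hρpos i) _)) (hxpos _)
  have hMreal : ∀ (ℓ : ℕ) (lam : FinPath k N A ℓ),
      (M (Cyl lam)).toReal = Mval ρ x ⟨ℓ, lam⟩ := fun ℓ lam => by
    rw [hM ⟨ℓ, lam⟩, ENNReal.toReal_ofReal (hMvalpos _).le]
  have hMnk : ∀ lam : FinPath k N A (n * k),
      (M (Cyl lam)).toReal = ((∏ i, ρ i) ^ n)⁻¹ * x lam.src := fun lam => by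
    rw [hMreal, Mval_of_mod (Nat.mul_mod_left n k) (Nat.mul_div_cancel _ hk)]
  have hMk : ∀ η : FinPath k N A k,
      (M (Cyl η)).toReal = (∏ i, ρ i)⁻¹ * x η.src := fun η => by
    rw [hMreal, Mval_of_mod (Nat.mod_self k) (Nat.div_self hk), pow_one]
  have hmod1 : (n * k + k) % k = 0 := by
    rw [← Nat.succ_mul]; exact Nat.mul_mod_left _ _
  have hdiv1 : (n * k + k) / k = n + 1 := by
    rw [← Nat.succ_mul]; exact Nat.mul_div_cancel _ hk
  have hMcat : ∀ (lam : FinPath k N A (n * k)) (η : FinPath k N A k) (h : η.rg = lam.src),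
      (M (cylCat lam η)).toReal = ((∏ i, ρ i) ^ (n + 1))⁻¹ * x η.src := fun lam η h => by
    rw [← cyl_cat lam η h, hMreal, Mval_of_mod hmod1 hdiv1, cat_src]
  -- the union decomposition of a cylinder
  have hcylU : ∀ lam : FinPath k N A (n * k),
      Cyl lam = ⋃ j ∈ (Finset.univ : Finset (Fin (mfun lam.src))), cylCat lam (μpath lam.src j) := by
    intro lam
    ext y
    constructor
    · intro hy
      obtain ⟨j, hj⟩ := hμsurj lam.src (seg n y) (seg_rg_eq_src hy)
      exact Set.mem_biUnion (Finset.mem_univ j) (by rw [hj]; exact mem_cylCat_seg hy)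
    · intro hy
      obtain ⟨j, -, hyj⟩ := Set.mem_iUnion₂.1 hy
      exact cylCat_subset hyj
  have hchisum : ∀ lam : FinPath k N A (n * k),
      chi M lam = ∑ j : Fin (mfun lam.src), chiC M lam (μpath lam.src j) := by
    intro lam
    have hd : ∀ (i j : Fin (mfun lam.src)), i ≠ j →
        Disjoint (cylCat lam (μpath lam.src i)) (cylCat lam (μpath lam.src j)) := by
      intro i j hij
      rw [Set.disjoint_iff_inter_eq_empty]
      exact cylCat_disjoint (Or.inr fun hc => hij (hμinj lam.src hc))
    exact (ind_congr (hcylU lam) (measurableSet_cyl lam) _).trans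
      (ind_finset_sum (μ := M) Finset.univ (fun j => cylCat lam (μpath lam.src j))
        (fun j => measurableSet_cylCat _ _) hd)
  -- positivity of the various scalars
  have hcpos : ∀ (v : Fin N) (j : Fin (mfun v)), 0 < (M (Cyl (μpath v j))).toReal := by
    intro v j
    rw [hMk]
    exact mul_pos (inv_pos.2 hrpos) (hxpos _)
  have hs0 : (0 : ℝ) < (∏ i, ρ i) ^ ((n : ℝ) / 2) := Real.rpow_pos_of_pos hrpos _
  -- the key cast algebra
  have hkey0 : ∀ xs : ℝ, xs ≠ 0 →
      ((((∏ i, ρ i)⁻¹ * xs : ℝ) : ℂ))⁻¹ * ((((∏ i, ρ i) ^ (n + 1))⁻¹ * xs : ℝ) : ℂ)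
        = ((((∏ i, ρ i) ^ n)⁻¹ : ℝ) : ℂ) := by
    intro xs hxs
    have hrne : (∏ i, ρ i) ≠ 0 := hrpos.ne'
    have hreal : ((∏ i, ρ i)⁻¹ * xs)⁻¹ * (((∏ i, ρ i) ^ (n + 1))⁻¹ * xs)
        = ((∏ i, ρ i) ^ n)⁻¹ := by
      field_simp
      ring
    rw [← Complex.ofReal_inv, ← Complex.ofReal_mul, hreal]
  -- orthogonality of each g p to V_n
  have hinner_g : ∀ (lam' : FinPath k N A (n * k)) (p), (inner ℂ (chi M lam') (g p) : ℂ) = 0 := by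
    intro lam' p
    rw [hg p, inner_smul_right, inner_sub_right, inner_smul_right, inner_smul_right,
      inner_chi_chiC, inner_chi_chiC]
    by_cases hl : lam' = p.1
    · subst hl
      rw [Set.inter_eq_left.2 cylCat_subset, Set.inter_eq_left.2 cylCat_subset,
        hMcat _ _ (hμrg _ _), hMcat _ _ (hμrg _ _), hMk, hMk,
        hkey0 _ (hxpos _).ne', hkey0 _ (hxpos _).ne', sub_self, mul_zero]
    · have hempty : ∀ η : FinPath k N A k, cylCat p.1 η ∩ Cyl lam' = ∅ := by
        intro η
        have hsub : cylCat p.1 η ∩ Cyl lam' ⊆ Cyl p.1 ∩ Cyl lam' :=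
          Set.inter_subset_inter_left _ cylCat_subset
        rw [cyl_disjoint (show p.1 ≠ lam' from fun h => hl h.symm)] at hsub
        exact Set.subset_empty_iff.1 hsub
      rw [hempty, hempty]
      simp
  -- each chiC lies in V_{n+1}
  have hchiCVt : ∀ (lam : FinPath k N A (n * k)) (η : FinPath k N A k) (h : η.rg = lam.src),
      chiC M lam η ∈ Vt M ((n + 1) * k) := by
    intro lam η h
    have hcy : Cyl ((Nat.succ_mul n k).symm ▸ cat n lam η h : FinPath k N A ((n + 1) * k))
        = cylCat lam η := (cyl_cast _ _).trans (cyl_cat lam η h)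
    rw [chiC_eq_chi M lam η h _ hcy]
    exact Submodule.subset_span ⟨_, rfl⟩
  -- G ≤ Wn
  have hGle : Submodule.span ℂ (Set.range g) ≤ Wn M n := by
    rw [Submodule.span_le]
    rintro f ⟨p, rfl⟩
    refine Submodule.mem_inf.2 ⟨?_, ?_⟩
    · rw [hg]
      exact Submodule.smul_mem _ _ (Submodule.sub_mem _
        (Submodule.smul_mem _ _ (hchiCVt p.1 _ (hμrg _ _)))
        (Submodule.smul_mem _ _ (hchiCVt p.1 _ (hμrg _ _))))
    · rw [Submodule.mem_orthogonal]
      intro u hu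
      have hu' : u ∈ Submodule.span ℂ
          (Set.range fun lam : FinPath k N A (n * k) => chi M lam) := hu
      clear hu
      induction hu' using Submodule.span_induction with
      | mem u hu2 =>
        obtain ⟨lam', rfl⟩ := hu2
        exact hinner_g lam' p
      | zero => exact inner_zero_left _
      | add u v hu2 hv2 ihu ihv => rw [inner_add_left, ihu, ihv, add_zero]
      | smul a u hu2 ihu => rw [inner_smul_left, ihu, mul_zero]
  -- membership of the chiC in Vt(nk) ⊔ G
  have hmemall : ∀ (lam : FinPath k N A (n * k)) (j : Fin (mfun lam.src)),
      chiC M lam (μpath lam.src j) ∈ Vt M (n * k) ⊔ Submodule.span ℂ (Set.range g) := by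
    intro lam j
    set m0 : Fin (mfun lam.src) := ⟨0, hmpos _⟩ with hm0
    set c : Fin (mfun lam.src) → ℝ := fun jj => (M (Cyl (μpath lam.src jj))).toReal with hcdef
    set e : Fin (mfun lam.src) → Lp ℂ 2 M := fun jj => chiC M lam (μpath lam.src jj) with hedef
    have hcne : ∀ jj, ((c jj : ℝ) : ℂ) ≠ 0 := fun jj => by
      exact_mod_cast (hcpos lam.src jj).ne'
    set d : Fin (mfun lam.src) → Lp ℂ 2 M :=
      fun jj => ((c m0 : ℝ) : ℂ)⁻¹ • e m0 - ((c jj : ℝ) : ℂ)⁻¹ • e jj with hddef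
    have hdG : ∀ jj, d jj ∈ Submodule.span ℂ (Set.range g) := by
      intro jj
      by_cases h0 : jj = m0
      · rw [hddef]
        simp only [h0, sub_self]
        exact Submodule.zero_mem _
      · have h1 : 1 ≤ (jj : ℕ) := by
          rcases Nat.eq_zero_or_pos (jj : ℕ) with h | h
          · exact absurd (Fin.ext h : jj = m0) h0
          · exact h
        set p : (Σ lam : FinPath k N A (n * k), { i : ℕ // 1 ≤ i ∧ i < mfun lam.src }) :=
          ⟨lam, ⟨(jj : ℕ), ⟨h1, jj.2⟩⟩⟩ with hpdef
        have hg' : g p = ((((∏ i, ρ i) ^ ((n : ℝ) / 2) : ℝ)) : ℂ) • d jj := hg p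
        have hd' : d jj = ((((∏ i, ρ i) ^ ((n : ℝ) / 2) : ℝ)) : ℂ)⁻¹ • g p := by
          rw [hg', smul_smul, inv_mul_cancel₀ (by exact_mod_cast hs0.ne'), one_smul]
        rw [hd']
        exact Submodule.smul_mem _ _ (Submodule.subset_span ⟨p, rfl⟩)
    have hsum_e : chi M lam = ∑ jj, e jj := hchisum lam
    have hkey : ((∑ jj, c jj : ℝ) : ℂ) • (((c m0 : ℝ) : ℂ)⁻¹ • e m0)
        = chi M lam + ∑ jj, ((c jj : ℝ) : ℂ) • d jj := by
      rw [hsum_e, ← Finset.sum_add_distrib,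
        show ((∑ jj, c jj : ℝ) : ℂ) = ∑ jj, ((c jj : ℝ) : ℂ) by push_cast; rfl,
        Finset.sum_smul]
      refine Finset.sum_congr rfl fun jj _ => ?_
      simp only [hddef]
      rw [smul_sub, smul_smul ((c jj : ℝ) : ℂ) (((c jj : ℝ) : ℂ))⁻¹ (e jj),
        mul_inv_cancel₀ (hcne jj), one_smul]
      abel
    have hW : ((∑ jj, c jj : ℝ) : ℂ) • (((c m0 : ℝ) : ℂ)⁻¹ • e m0)
        ∈ Vt M (n * k) ⊔ Submodule.span ℂ (Set.range g) := by
      rw [hkey]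
      exact Submodule.add_mem _
        (Submodule.mem_sup_left (Submodule.subset_span ⟨lam, rfl⟩))
        (Submodule.sum_mem _ fun jj _ =>
          Submodule.mem_sup_right (Submodule.smul_mem _ _ (hdG jj)))
    have hcsne : ((∑ jj, c jj : ℝ) : ℂ) ≠ 0 := by
      have : 0 < ∑ jj, c jj :=
        Finset.sum_pos (fun jj _ => hcpos lam.src jj) ⟨m0, Finset.mem_univ m0⟩
      exact_mod_cast this.ne'
    have he0x : ((c m0 : ℝ) : ℂ)⁻¹ • e m0 ∈ Vt M (n * k) ⊔ Submodule.span ℂ (Set.range g) := by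
      have h2 : ((c m0 : ℝ) : ℂ)⁻¹ • e m0 = ((∑ jj, c jj : ℝ) : ℂ)⁻¹ •
          (((∑ jj, c jj : ℝ) : ℂ) • (((c m0 : ℝ) : ℂ)⁻¹ • e m0)) := by
        rw [smul_smul, inv_mul_cancel₀ hcsne, one_smul]
      rw [h2]
      exact Submodule.smul_mem _ _ hW
    have h3 : e j = ((c j : ℝ) : ℂ) • (((c m0 : ℝ) : ℂ)⁻¹ • e m0 - d j) := by
      simp only [hddef]
      rw [sub_sub_cancel, smul_smul, mul_inv_cancel₀ (hcne j), one_smul]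
    show e j ∈ _
    rw [h3]
    exact Submodule.smul_mem _ _ (Submodule.sub_mem _ he0x
      (Submodule.mem_sup_right (hdG j)))
  -- V_{n+1} ≤ V_n ⊔ G
  have hVsup : Vt M ((n + 1) * k) ≤ Vt M (n * k) ⊔ Submodule.span ℂ (Set.range g) := by
    rw [show Vt M ((n + 1) * k) = Submodule.span ℂ
      (Set.range fun lam : FinPath k N A ((n + 1) * k) => chi M lam) from rfl,
      Submodule.span_le]
    rintro f ⟨lam1, rfl⟩
    show chi M lam1 ∈ (Vt M (n * k) ⊔ Submodule.span ℂ (Set.range g) : Submodule ℂ (Lp ℂ 2 M))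
    set lam1' : FinPath k N A (n * k + k) := (Nat.succ_mul n k ▸ lam1) with hlam1'
    have hcy1 : Cyl lam1 = cylCat (trunc lam1') (tail lam1') := by
      rw [← cyl_cat _ _ (tail_rg lam1'), cat_trunc_tail, hlam1', cyl_cast]
    obtain ⟨j, hj⟩ := hμsurj (trunc lam1').src (tail lam1') (tail_rg lam1')
    have : chi M lam1 = chiC M (trunc lam1') (μpath (trunc lam1').src j) := by
      rw [hj]
      exact ind_congr hcy1 _ _
    rw [this]
    exact hmemall (trunc lam1') j
  -- Wn ≤ G
  have hWle : Wn M n ≤ Submodule.span ℂ (Set.range g) := by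
    intro f hf
    obtain ⟨hf1, hf2⟩ := Submodule.mem_inf.1 hf
    obtain ⟨u, hu, w, hw, huw⟩ := Submodule.mem_sup.1 (hVsup hf1)
    have hwperp : w ∈ (Vt M (n * k))ᗮ := (Submodule.mem_inf.1 (hGle hw)).2
    have hinner_u : (inner ℂ u u : ℂ) = 0 := by
      have hufw : u = f - w := by rw [← huw]; abel
      have h4 : (inner ℂ u u : ℂ) = inner ℂ u (f - w) := by rw [← hufw]
      rw [h4, inner_sub_right, Submodule.inner_right_of_mem_orthogonal hu hf2,
        Submodule.inner_right_of_mem_orthogonal hu hwperp, sub_zero]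
    have hu0 : u = 0 := inner_self_eq_zero.1 hinner_u
    rw [← huw, hu0, zero_add]
    exact hw
  -- linear independence
  have hli : LinearIndependent ℂ g := by
    rw [linearIndependent_iff']
    intro s a hsum p0 hp0
    set φ := chiC M p0.1 (μpath p0.1.src ⟨p0.2.1, p0.2.2.2⟩) with hφ
    have h0 : (inner ℂ φ (∑ q ∈ s, a q • g q) : ℂ) = 0 := by rw [hsum, inner_zero_right]
    rw [inner_sum] at h0
    have hterm : ∀ q ∈ s, q ≠ p0 → (inner ℂ φ (a q • g q) : ℂ) = 0 := by
      intro q _ hne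
      rw [inner_smul_right, hg q, inner_smul_right, inner_sub_right,
        inner_smul_right, inner_smul_right, inner_chiC_chiC, inner_chiC_chiC]
      by_cases hq1 : q.1 = p0.1
      · obtain ⟨qlam, qi, hqi⟩ := q
        obtain ⟨plam, pi, hpi⟩ := p0
        simp only at hq1
        subst hq1
        have hii : qi ≠ pi := by
          intro hqp
          exact hne (by subst hqp; rfl)
        have hd1 : cylCat qlam (μpath qlam.src ⟨0, hmpos qlam.src⟩) ∩
            cylCat qlam (μpath qlam.src ⟨pi, hpi.2⟩) = ∅ := by
          refine cylCat_disjoint (Or.inr fun hc => ?_)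
          have := hμinj qlam.src hc
          simp only [Fin.mk.injEq] at this
          omega
        have hd2 : cylCat qlam (μpath qlam.src ⟨qi, hqi.2⟩) ∩
            cylCat qlam (μpath qlam.src ⟨pi, hpi.2⟩) = ∅ := by
          refine cylCat_disjoint (Or.inr fun hc => ?_)
          have := hμinj qlam.src hc
          simp only [Fin.mk.injEq] at this
          exact hii this
        rw [hd1, hd2]
        simp
      · rw [cylCat_disjoint (Or.inl hq1), cylCat_disjoint (Or.inl hq1)]
        simp
    rw [Finset.sum_eq_single p0 hterm (fun h => absurd hp0 h)] at h0
    rw [inner_smul_right, hg p0, inner_smul_right, inner_sub_right,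
      inner_smul_right, inner_smul_right, inner_chiC_chiC, inner_chiC_chiC] at h0
    have hd1 : cylCat p0.1 (μpath p0.1.src ⟨0, hmpos p0.1.src⟩) ∩
        cylCat p0.1 (μpath p0.1.src ⟨p0.2.1, p0.2.2.2⟩) = ∅ := by
      refine cylCat_disjoint (Or.inr fun hc => ?_)
      have := hμinj p0.1.src hc
      simp only [Fin.mk.injEq] at this
      have := p0.2.2.1
      omega
    have hd2 : cylCat p0.1 (μpath p0.1.src ⟨p0.2.1, p0.2.2.2⟩) ∩
        cylCat p0.1 (μpath p0.1.src ⟨p0.2.1, p0.2.2.2⟩) = cylCat p0.1 (μpath p0.1.src ⟨p0.2.1, p0.2.2.2⟩) :=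
      Set.inter_self _
    rw [hd1, hd2, hMcat _ _ (hμrg _ _)] at h0
    simp only [measure_empty, ENNReal.toReal_zero, Complex.ofReal_zero, mul_zero,
      zero_sub, mul_neg, neg_eq_zero] at h0
    have h1 : ((((∏ i, ρ i) ^ ((n : ℝ) / 2) : ℝ)) : ℂ) ≠ 0 := by exact_mod_cast hs0.ne'
    have h2 : (((M (Cyl (μpath p0.1.src ⟨p0.2.1, p0.2.2.2⟩))).toReal : ℂ))⁻¹ ≠ 0 :=
      inv_ne_zero (by exact_mod_cast (hcpos p0.1.src _).ne')
    have h3 : ((((∏ i, ρ i) ^ (n + 1))⁻¹ *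
        x (μpath p0.1.src ⟨p0.2.1, p0.2.2.2⟩).src : ℝ) : ℂ) ≠ 0 := by
      have hmv : (0 : ℝ) < ((∏ i, ρ i) ^ (n + 1))⁻¹ *
          x (μpath p0.1.src ⟨p0.2.1, p0.2.2.2⟩).src :=
        mul_pos (inv_pos.2 (pow_pos hrpos _)) (hxpos _)
      exact_mod_cast hmv.ne'
    rcases mul_eq_zero.1 h0 with h | h
    · exact h
    · exact absurd h (mul_ne_zero h1 (mul_ne_zero h2 h3))
  exact ⟨hli, le_antisymm hGle hWle⟩

end KBratteli
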